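/- If the hospital-side choice function C_H satisfies substitutability, the law of aggregate demand, and the irrelevance of rejected contracts, then the cumulative offer (generalized DA) process produces a stable allocation that is doctor-optimal: for any other stable allocation X', every doctor weakly prefers her contract in the DA outcome. -/

import Mathlib

open Finset

variable {D H : Type*} [Fintype D] [DecidableEq D] [Fintype H] [DecidableEq H]

/-- The doctor-side choice from a set of contracts: each doctor keeps her most
preferred acceptable contract (preferences given by the list `pref d` of `d`'s
acceptable hospitals in order of strict preference). -/
def chooseD (pref : D → List H) (Y : Finset (D × H)) : Finset (D × H) :=
  Y.filter (fun p => p.2 ∈ pref p.1 ∧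
    ∀ h' ∈ pref p.1, (p.1, h') ∈ Y → (pref p.1).idxOf p.2 ≤ (pref p.1).idxOf h')

/-- Hatfield–Milgrom stability of an allocation `X` with respect to the
hospital-side choice function `CH`. -/
def StableAlloc (pref : D → List H) (CH : Finset (D × H) → Finset (D × H))
    (X : Finset (D × H)) : Prop :=
  chooseD pref X = X ∧ CH X = X ∧
    ∀ x : D × H, x ∉ X → x ∈ chooseD pref (insert x X) → x ∉ CH (insert x X)

/-- `X ⪰_D X'`: every doctor weakly prefers her contract in `X` to that in `X'`. -/
def WeakPrefD (pref : D → List H) (X X' : Finset (D × H)) : Prop :=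
  ∀ d h', (d, h') ∈ X' →
    ∃ h, (d, h) ∈ X ∧ (pref d).idxOf h ≤ (pref d).idxOf h'

/-- The distribution `ξ(X)`: the number of contracts of `X` naming hospital `h`. -/
def xiDist (X : Finset (D × H)) (h : H) : ℕ :=
  (X.filter (fun p => p.2 = h)).card

/-- Substitutability of a choice function. -/
def Substitutable {α : Type*} [DecidableEq α] (C : Finset α → Finset α) : Prop :=
  ∀ (Y : Finset α) (x x' : α), x ∉ C (insert x Y) → x ∉ C (insert x' (insert x Y))

/-- The law of aggregate demand. -/
def LawOfAggregateDemand {α : Type*} (C : Finset α → Finset α) : Prop :=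
  ∀ Y Y' : Finset α, Y' ⊆ Y → (C Y').card ≤ (C Y).card

/-- Irrelevance of rejected contracts. -/
def IRC {α : Type*} [DecidableEq α] (C : Finset α → Finset α) : Prop :=
  ∀ (Y : Finset α) (x : α), x ∉ C (insert x Y) → C Y = C (insert x Y)

/-- The next contract doctor `d` offers, given the set `A` of contracts already
offered: her best contract not yet offered. -/
def nextOffer (pref : D → List H) (A : Finset (D × H)) (d : D) : Option (D × H) :=
  ((pref d).find? (fun h => decide ((d, h) ∉ A))).map (fun h => (d, h))

/-- One round of the cumulative offer (generalized deferred acceptance) process: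
every doctor none of whose contracts is currently held offers her next best
contract. -/
def copStep (pref : D → List H) (CH : Finset (D × H) → Finset (D × H))
    (A : Finset (D × H)) : Finset (D × H) :=
  A ∪ univ.filter (fun p : D × H =>
    (∀ y ∈ CH A, y.1 ≠ p.1) ∧ nextOffer pref A p.1 = some p)

/-- The outcome of the cumulative offer process: the hospital side's choice from
all contracts offered at termination. -/
def copOutcome (pref : D → List H) (CH : Finset (D × H) → Finset (D × H)) :
    Finset (D × H) :=
  CH ((copStep pref CH)^[Fintype.card D * Fintype.card H + 1] ∅)



section Aux

lemma find?_earlier {α : Type*} [DecidableEq α] {p : α → Bool} {l : List α} {b : α}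
    (h : l.find? p = some b) {a : α} (ha : a ∈ l)
    (hlt : l.idxOf a < l.idxOf b) : p a = false := by
  induction l with
  | nil => simp at ha
  | cons c t ih =>
    rw [List.find?_cons] at h
    by_cases hc : p c = true
    · simp [hc] at h
      subst h
      simp [List.idxOf_cons_self] at hlt
    · simp only [Bool.not_eq_true] at hc
      rw [hc] at h
      rcases List.mem_cons.1 ha with rfl | hat
      · exact hc
      · have hbt : b ∈ t := List.mem_of_find?_eq_some h
        have hbc : b ≠ c := by
          rintro rfl
          rw [List.find?_some h] at hc; exact Bool.noConfusion hc
        by_cases hac : a = c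
        · subst hac; exact hc
        · apply ih h hat
          rw [List.idxOf_cons_ne t (Ne.symm hac), List.idxOf_cons_ne t (Ne.symm hbc)] at hlt
          exact Nat.lt_of_succ_lt_succ hlt

lemma rejMono {α : Type*} [DecidableEq α] {CH : Finset α → Finset α}
    (hS : Substitutable CH) {A B : Finset α} (hAB : A ⊆ B) {x : α}
    (hx : x ∈ A) (hr : x ∉ CH A) : x ∉ CH B := by
  have key : ∀ s : Finset α, x ∉ CH (A ∪ s) := by
    intro s
    induction s using Finset.induction_on with
    | empty => simpa using hr
    | @insert a s ha ih =>
      have h1 : A ∪ insert a s = insert a (A ∪ s) := by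
        rw [Finset.union_insert]
      rw [h1]
      have hxs : insert x (A ∪ s) = A ∪ s :=
        Finset.insert_eq_self.2 (Finset.mem_union_left _ hx)
      have := hS (A ∪ s) x a (by rw [hxs]; exact ih)
      rwa [hxs] at this
  have hB : A ∪ B = B := Finset.union_eq_right.2 hAB
  rw [← hB]; exact key B

lemma ircEq {α : Type*} [DecidableEq α] {CH : Finset α → Finset α} (hIRC : IRC CH) :
    ∀ (Y Y' : Finset α), CH Y ⊆ Y' → Y' ⊆ Y → CH Y' = CH Y := by
  intro Y
  induction Y using Finset.strongInduction with
  | _ Y ih =>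
    intro Y' h1 h2
    rcases h2.ssubset_or_eq with hss | rfl
    case inr => rfl
    · obtain ⟨a, haY, haY'⟩ := Finset.exists_of_ssubset hss
      have ha : a ∉ CH Y := fun h => haY' (h1 h)
      have he : insert a (Y.erase a) = Y := Finset.insert_erase haY
      have heq : CH (Y.erase a) = CH Y := by
        have := hIRC (Y.erase a) a (by rw [he]; exact ha)
        rwa [he] at this
      have h2' : Y' ⊆ Y.erase a := fun b hb =>
        Finset.mem_erase.2 ⟨fun hba => haY' (hba ▸ hb), h2 hb⟩
      rw [← heq]
      exact (ih (Y.erase a) (Finset.erase_ssubset haY) Y' (heq ▸ h1) h2')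

end Aux


section COP

set_option linter.unusedSectionVars false

variable {D H : Type*} [Fintype D] [DecidableEq D] [Fintype H] [DecidableEq H]
variable (pref : D → List H) (CH : Finset (D × H) → Finset (D × H))

lemma mem_copStep {A : Finset (D × H)} {p : D × H} :
    p ∈ copStep pref CH A ↔
      p ∈ A ∨ ((∀ y ∈ CH A, y.1 ≠ p.1) ∧ nextOffer pref A p.1 = some p) := by
  simp [copStep]

lemma nextOffer_eq_some {A : Finset (D × H)} {d : D} {p : D × H}
    (h : nextOffer pref A d = some p) :
    ∃ h0, (pref d).find? (fun h => decide ((d, h) ∉ A)) = some h0 ∧ p = (d, h0) := by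
  simp only [nextOffer, Option.map_eq_some_iff] at h
  obtain ⟨h0, h1, h2⟩ := h
  exact ⟨h0, h1, h2.symm⟩

lemma subset_copStep (A : Finset (D × H)) : A ⊆ copStep pref CH A :=
  Finset.subset_union_left

lemma copIter_mono {m n : ℕ} (h : m ≤ n) :
    (copStep pref CH)^[m] ∅ ⊆ (copStep pref CH)^[n] ∅ := by
  induction n with
  | zero => obtain rfl := Nat.le_zero.1 h; exact Finset.Subset.refl _
  | succ n ih =>
    rcases Nat.lt_or_ge m (n+1) with h1 | h2
    · rw [Function.iterate_succ_apply']
      exact (ih (Nat.lt_succ_iff.1 h1)).trans (subset_copStep pref CH _)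
    · have : m = n + 1 := le_antisymm h h2
      subst this; exact Finset.Subset.refl _

/-- Basic invariants of the cumulative offer process. -/
lemma cop_basic (hS : Substitutable CH) (n : ℕ) :
    (∀ p ∈ (copStep pref CH)^[n] ∅, p.2 ∈ pref p.1) ∧
    (∀ d g g', (d, g') ∈ (copStep pref CH)^[n] ∅ → g ∈ pref d →
      (pref d).idxOf g < (pref d).idxOf g' → (d, g) ∈ (copStep pref CH)^[n] ∅) ∧
    (∀ d g g', (d, g) ∈ (copStep pref CH)^[n] ∅ → (d, g') ∈ (copStep pref CH)^[n] ∅ →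
      (pref d).idxOf g < (pref d).idxOf g' →
      (d, g) ∉ CH ((copStep pref CH)^[n] ∅)) := by
  induction n with
  | zero => simp
  | succ n ih =>
    obtain ⟨I0, DC, I4⟩ := ih
    set A := (copStep pref CH)^[n] ∅ with hA
    have hAs : (copStep pref CH)^[n+1] ∅ = copStep pref CH A := by
      rw [Function.iterate_succ_apply']
    have hsubA : A ⊆ (copStep pref CH)^[n+1] ∅ := by
      rw [hAs]; exact subset_copStep pref CH A
    -- I0 at n+1
    have I0' : ∀ p ∈ (copStep pref CH)^[n+1] ∅, p.2 ∈ pref p.1 := by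
      intro p hp
      rw [hAs, mem_copStep] at hp
      rcases hp with hp | ⟨_, hno⟩
      · exact I0 p hp
      · obtain ⟨h0, hf, heq⟩ := nextOffer_eq_some pref hno
        rw [heq]
        exact List.mem_of_find?_eq_some hf
    -- DC at n+1
    have DC' : ∀ d g g', (d, g') ∈ (copStep pref CH)^[n+1] ∅ → g ∈ pref d →
        (pref d).idxOf g < (pref d).idxOf g' →
        (d, g) ∈ (copStep pref CH)^[n+1] ∅ := by
      intro d g g' hg' hgmem hlt
      rw [hAs, mem_copStep] at hg'
      rcases hg' with hg' | ⟨_, hno⟩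
      · exact hsubA (DC d g g' hg' hgmem hlt)
      · obtain ⟨h0, hf, heq⟩ := nextOffer_eq_some pref hno
        have hgg : h0 = g' := by
          have := congrArg Prod.snd heq; simpa using this.symm
        rw [hgg] at hf
        have hfa : (fun h => decide ((d, h) ∉ A)) g = false :=
          find?_earlier hf hgmem hlt
        simp only [decide_eq_false_iff_not, not_not] at hfa
        exact hsubA hfa
    refine ⟨I0', DC', ?_⟩
    -- I4 at n+1
    intro d g g' hg hg' hlt
    rw [hAs, mem_copStep] at hg'
    rcases hg' with hg'A | ⟨hnone, hno'⟩
    · -- g' was already offered; then g was too (by DC), apply IH + rejMono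
      have hgA : (d, g) ∈ A := by
        rw [hAs, mem_copStep] at hg
        rcases hg with hg | ⟨_, hno⟩
        · exact hg
        · obtain ⟨h0, hf, heq⟩ := nextOffer_eq_some pref hno
          have hgg : h0 = g := by
            have := congrArg Prod.snd heq; simpa using this.symm
          rw [hgg] at hf
          have hgnot : (d, g) ∉ A := by
            have := List.find?_some hf
            simpa using this
          exact absurd (DC d g g' hg'A (List.mem_of_find?_eq_some hf) hlt) hgnot
      have := I4 d g g' hgA hg'A hlt
      exact rejMono hS (hAs ▸ hsubA) hgA this
    · -- g' newly offered: no contract of d is held at stage n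
      obtain ⟨h0, hf', heq'⟩ := nextOffer_eq_some pref hno'
      have hh0 : h0 = g' := by
        have := congrArg Prod.snd heq'; simpa using this.symm
      rw [hh0] at hf'
      rw [hAs, mem_copStep] at hg
      rcases hg with hgA | ⟨_, hno⟩
      · have hrej : (d, g) ∉ CH A := by
          intro hin
          exact (hnone (d, g) hin) rfl
        exact rejMono hS (hAs ▸ hsubA) hgA hrej
      · obtain ⟨h1, hf, heq⟩ := nextOffer_eq_some pref hno
        have hh1 : h1 = g := by
          have := congrArg Prod.snd heq; simpa using this.symm
        rw [hh1] at hf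
        rw [hf] at hf'
        have : g = g' := by simpa using hf'
        rw [this] at hlt
        exact absurd hlt (lt_irrefl _)

/-- The iterate used in `copOutcome` is a fixed point of `copStep`. -/
lemma cop_fixed :
    copStep pref CH ((copStep pref CH)^[Fintype.card D * Fintype.card H + 1] ∅)
      = (copStep pref CH)^[Fintype.card D * Fintype.card H + 1] ∅ := by
  set N := Fintype.card D * Fintype.card H + 1 with hN
  have key : ∀ n : ℕ,
      copStep pref CH ((copStep pref CH)^[n] ∅) = (copStep pref CH)^[n] ∅ ∨
      n ≤ ((copStep pref CH)^[n] ∅).card := by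
    intro n
    induction n with
    | zero => right; exact Nat.zero_le _
    | succ n ih =>
      rcases ih with hfix | hcard
      · left
        rw [Function.iterate_succ_apply', hfix, hfix]
      · by_cases hfix : copStep pref CH ((copStep pref CH)^[n] ∅) = (copStep pref CH)^[n] ∅
        · left
          rw [Function.iterate_succ_apply', hfix, hfix]
        · right
          rw [Function.iterate_succ_apply']
          have hss : (copStep pref CH)^[n] ∅ ⊂ copStep pref CH ((copStep pref CH)^[n] ∅) :=
            Finset.ssubset_iff_subset_ne.2 ⟨subset_copStep pref CH _, Ne.symm hfix⟩
          have := Finset.card_lt_card hss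
          omega
  rcases key N with hfix | hcard
  · exact hfix
  · exfalso
    have h1 : ((copStep pref CH)^[N] ∅).card ≤ Fintype.card (D × H) :=
      Finset.card_le_univ _
    rw [Fintype.card_prod] at h1
    omega

/-- If the process is at a fixed point and a doctor has an unoffered acceptable
contract, some contract of hers is held. -/
lemma exists_held {A : Finset (D × H)} (hfix : copStep pref CH A = A)
    {d : D} {h0 : H} (h0mem : h0 ∈ pref d) (hnot : (d, h0) ∉ A) :
    ∃ hz, (d, hz) ∈ CH A := by
  by_contra hcon
  push_neg at hcon
  have hnone : ∀ y ∈ CH A, y.1 ≠ d := by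
    rintro ⟨e, g⟩ hy rfl
    exact hcon g hy
  rcases hno : nextOffer pref A d with _ | p
  · simp only [nextOffer, Option.map_eq_none_iff] at hno
    rw [List.find?_eq_none] at hno
    have := hno h0 h0mem
    simp only [decide_eq_true_eq, not_not] at this
    exact hnot this
  · obtain ⟨h1, hf, rfl⟩ := nextOffer_eq_some pref hno
    have hpA : (d, h1) ∈ A := by
      rw [← hfix, mem_copStep]
      right
      exact ⟨hnone, hno⟩
    have : (d, h1) ∉ A := by
      have := List.find?_some hf
      simpa using this
    exact this hpA

/-- No contract belonging to a stable allocation is ever rejected during the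
cumulative offer process. -/
lemma cop_protect (hsub : ∀ Y, CH Y ⊆ Y) (hS : Substitutable CH)
    (hLAD : LawOfAggregateDemand CH)
    {X' : Finset (D × H)} (hX' : StableAlloc pref CH X') (n : ℕ) :
    (∀ d g g', (d, g) ∈ (copStep pref CH)^[n] ∅ → (d, g') ∈ X' →
      (pref d).idxOf g ≤ (pref d).idxOf g') ∧
    (∀ x ∈ X', x ∈ (copStep pref CH)^[n] ∅ → x ∈ CH ((copStep pref CH)^[n] ∅)) := by
  obtain ⟨hch, hCX', hblock⟩ := hX'
  have hX'pref : ∀ d g', (d, g') ∈ X' → g' ∈ pref d := by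
    intro d g' hdg'
    rw [← hch] at hdg'
    exact (Finset.mem_filter.1 hdg').2.1
  induction n with
  | zero => simp
  | succ n ih =>
    obtain ⟨Q, L⟩ := ih
    set A := (copStep pref CH)^[n] ∅ with hA
    have hAs : (copStep pref CH)^[n+1] ∅ = copStep pref CH A := by
      rw [Function.iterate_succ_apply']
    have hsubA : A ⊆ (copStep pref CH)^[n+1] ∅ := by
      rw [hAs]; exact subset_copStep pref CH A
    have I0 := (cop_basic pref CH hS (n+1)).1
    have Q' : ∀ d g g', (d, g) ∈ (copStep pref CH)^[n+1] ∅ → (d, g') ∈ X' →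
        (pref d).idxOf g ≤ (pref d).idxOf g' := by
      intro d g g' hg hg'
      rw [hAs, mem_copStep] at hg
      rcases hg with hg | ⟨hnone, hno⟩
      · exact Q d g g' hg hg'
      · by_contra hcon
        push_neg at hcon
        obtain ⟨h0, hf, heq⟩ := nextOffer_eq_some pref hno
        have hh0 : h0 = g := by
          have := congrArg Prod.snd heq; simpa using this.symm
        rw [hh0] at hf
        have hfa := find?_earlier hf (hX'pref d g' hg') hcon
        simp only [decide_eq_false_iff_not, not_not] at hfa
        exact hnone (d, g') (L (d, g') hg' hfa) rfl
    refine ⟨Q', ?_⟩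
    intro x hx hxA
    by_contra hxr
    set Y := (copStep pref CH)^[n+1] ∅ ∪ X' with hY
    have hCHY : CH Y ⊆ X' := by
      intro z hz
      by_contra hzX'
      have hzY : z ∈ Y := hsub Y hz
      have hzB : z ∈ (copStep pref CH)^[n+1] ∅ := by
        rcases Finset.mem_union.1 hzY with h | h
        · exact h
        · exact absurd h hzX'
      obtain ⟨e, g⟩ := z
      have hzpref : g ∈ pref e := I0 (e, g) hzB
      have hzch : (e, g) ∈ chooseD pref (insert (e, g) X') := by
        rw [chooseD, Finset.mem_filter]
        refine ⟨Finset.mem_insert_self _ _, hzpref, ?_⟩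
        intro h'' h''mem hmem
        rcases Finset.mem_insert.1 hmem with heq | hmem'
        · have : h'' = g := by
            have := congrArg Prod.snd heq; simpa using this
          rw [this]
        · exact Q' e g h'' hzB hmem'
      have hblocked := hblock (e, g) hzX' hzch
      have hins : insert (e, g) X' ⊆ Y := by
        intro w hw
        rcases Finset.mem_insert.1 hw with rfl | hw
        · exact hzY
        · exact Finset.mem_union_right _ hw
      exact rejMono hS hins (Finset.mem_insert_self _ _) hblocked hz
    have hxY : x ∉ CH Y := rejMono hS Finset.subset_union_left hxA hxr
    have hss : CH Y ⊂ X' :=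
      Finset.ssubset_iff_subset_ne.2 ⟨hCHY, fun he => hxY (he ▸ hx)⟩
    have h1 : (CH Y).card < X'.card := Finset.card_lt_card hss
    have h2 : X'.card ≤ (CH Y).card := by
      have := hLAD Y X' Finset.subset_union_right
      rwa [hCX'] at this
    omega

end COP


/-- if the hospital-side choice function satisfies substitutability,
the law of aggregate demand, and the irrelevance of rejected contracts, then the
cumulative offer process produces a stable allocation that is doctor-optimal: every
doctor weakly prefers her contract in its outcome to her contract in any other
stable allocation. -/
theorem cop_stable_doctor_optimal
    (pref : D → List H) (hnd : ∀ d, (pref d).Nodup)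
    (CH : Finset (D × H) → Finset (D × H)) (hsub : ∀ Y, CH Y ⊆ Y)
    (hS : Substitutable CH) (hLAD : LawOfAggregateDemand CH) (hIRC : IRC CH) :
    StableAlloc pref CH (copOutcome pref CH) ∧
      ∀ X' : Finset (D × H), StableAlloc pref CH X' →
        WeakPrefD pref (copOutcome pref CH) X' := by
  classical
  set N := Fintype.card D * Fintype.card H + 1 with hN
  set Afin := (copStep pref CH)^[N] ∅ with hAfin
  have hfix : copStep pref CH Afin = Afin := cop_fixed pref CH
  obtain ⟨I0, DC, I4⟩ := cop_basic pref CH hS N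
  set Z := CH Afin with hZ
  have hZout : copOutcome pref CH = Z := rfl
  rw [hZout]
  have hZA : Z ⊆ Afin := hsub Afin
  have hCZ : CH Z = Z := by
    have := ircEq hIRC Afin Z (Finset.Subset.refl _) hZA
    rw [this]
  have hchZ : chooseD pref Z = Z := by
    apply Finset.Subset.antisymm (Finset.filter_subset _ _)
    intro p hp
    obtain ⟨d, h⟩ := p
    simp only [chooseD, Finset.mem_filter]
    refine ⟨hp, I0 (d, h) (hZA hp), ?_⟩
    intro h'' h''mem hin
    by_contra hcon
    push_neg at hcon
    exact (I4 d h'' h (hZA hin) (hZA hp) hcon) hin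
  have hstable : StableAlloc pref CH Z := by
    refine ⟨hchZ, hCZ, ?_⟩
    rintro ⟨d, h⟩ hxZ hxch
    simp only [chooseD, Finset.mem_filter] at hxch
    obtain ⟨-, hhp, hbest⟩ := hxch
    by_cases hxA : (d, h) ∈ Afin
    · have heq : CH (insert (d, h) Z) = CH Afin :=
        ircEq hIRC Afin _ (fun w hw => Finset.mem_insert_of_mem hw) (by
          intro w hw
          rcases Finset.mem_insert.1 hw with rfl | hw
          · exact hxA
          · exact hZA hw)
      rw [heq, ← hZ]
      exact hxZ
    · obtain ⟨hz, hzZ⟩ := exists_held pref CH hfix hhp hxA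
      have hzpref : hz ∈ pref d := I0 (d, hz) (hZA hzZ)
      have h1 : (pref d).idxOf h ≤ (pref d).idxOf hz :=
        hbest hz hzpref (Finset.mem_insert_of_mem hzZ)
      have h2 : ¬ (pref d).idxOf h < (pref d).idxOf hz :=
        fun hlt => hxA (DC d h hz (hZA hzZ) hhp hlt)
      have h3 : h = hz :=
        (List.idxOf_inj hhp).1 (le_antisymm h1 (not_lt.1 h2))
      rw [h3] at hxZ
      exact absurd hzZ hxZ
  refine ⟨hstable, ?_⟩
  intro X' hX'
  obtain ⟨Q, L⟩ := cop_protect pref CH hsub hS hLAD hX' N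
  intro d h' hdh'
  have hpref' : h' ∈ pref d := by
    rw [← hX'.1] at hdh'
    exact (Finset.mem_filter.1 hdh').2.1
  by_cases hA : (d, h') ∈ Afin
  · exact ⟨h', L (d, h') hdh' hA, le_refl _⟩
  · obtain ⟨hz, hzZ⟩ := exists_held pref CH hfix hpref' hA
    refine ⟨hz, hzZ, ?_⟩
    by_contra hlt
    push_neg at hlt
    exact hA (DC d h' hz (hZA hzZ) hpref' hlt)
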